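/- Let b ∈ ℍ be purely imaginary and let i, i' be distinct, non-antipodal purely imaginary unit quaternions. If c ∈ ℂ(i) and c' ∈ ℂ(i') satisfy (1+c)x + i(1−c)x i = (1+c')x + i'(1−c')x i' for all purely imaginary x ∈ ℝ³, then c = c' = 1. -/

import Mathlib

open Quaternion
set_option maxHeartbeats 1000000

private lemma imsq (i : ℍ[ℝ]) (hi : i.re = 0) (hni : ‖i‖ = 1) : i * i = -1 := by
  have h2 : normSq i = 1 := by rw [Quaternion.normSq_eq_norm_mul_self, hni]; ring
  rw [Quaternion.normSq_def'] at h2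
  ext <;> simp [Quaternion.re_mul, Quaternion.imI_mul, Quaternion.imJ_mul, Quaternion.imK_mul, hi] <;> nlinarith [h2]

private lemma rekey (i x : ℍ[ℝ]) (hi : i.re=0) (hni : ‖i‖=1) (hx : x.re=0) (a bb : ℝ) :
    (1 + (a•(1:ℍ[ℝ]) + bb•i))*x + i*((1-(a•(1:ℍ[ℝ])+bb•i))*x)*i
      = (2:ℝ)•x - (2*(x*i).re) • (((a•(1:ℍ[ℝ])+bb•i)-1)*i) := by
  have h2 : normSq i = 1 := by rw [Quaternion.normSq_eq_norm_mul_self, hni]; ring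
  rw [Quaternion.normSq_def'] at h2
  rw [hi] at h2
  ext <;>
    simp [Quaternion.re_mul, Quaternion.imI_mul, Quaternion.imJ_mul, Quaternion.imK_mul, hi, hx,
      Quaternion.re_smul, Quaternion.imI_smul, Quaternion.imJ_smul, Quaternion.imK_smul]
  · linear_combination (bb*(x.imI*i.imI+x.imJ*i.imJ+x.imK*i.imK)) * h2
  · linear_combination ((1-a)*x.imI + bb*(x.imJ*i.imK - x.imK*i.imJ)) * h2
  · linear_combination ((1-a)*x.imJ + bb*(x.imK*i.imI - x.imI*i.imK)) * h2
  · linear_combination ((1-a)*x.imK + bb*(x.imI*i.imJ - x.imJ*i.imI)) * h2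

private lemma re_mul_comm (p q : ℍ[ℝ]) : (p*q).re = (q*p).re := by
  simp [Quaternion.re_mul]; ring

theorem stmt_12 (b : ℍ[ℝ]) (hb : b.re = 0)
    (i i' : ℍ[ℝ]) (hi : i.re = 0) (hni : ‖i‖ = 1)
    (hi' : i'.re = 0) (hni' : ‖i'‖ = 1) (hne : i ≠ i') (hne' : i ≠ -i')
    (c c' : ℍ[ℝ]) (hc : c ∈ Submodule.span ℝ ({1, i} : Set ℍ[ℝ]))
    (hc' : c' ∈ Submodule.span ℝ ({1, i'} : Set ℍ[ℝ]))
    (h : ∀ x : ℍ[ℝ], x.re = 0 →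
      (1 + c) * x + i * ((1 - c) * x) * i = (1 + c') * x + i' * ((1 - c') * x) * i') :
    c = 1 ∧ c' = 1 := by
  obtain ⟨a, bb, hab⟩ := Submodule.mem_span_pair.mp hc
  obtain ⟨a', bb', hab'⟩ := Submodule.mem_span_pair.mp hc'
  have hii : i * i = -1 := imsq i hi hni
  have hii' : i' * i' = -1 := imsq i' hi' hni'
  have key : ∀ x : ℍ[ℝ], x.re = 0 →
      (2*(x*i).re) • ((c-1)*i) = (2*(x*i').re) • ((c'-1)*i') := by
    intro x hx
    have h1 := h x hx
    rw [← hab, ← hab'] at h1 ⊢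
    rw [rekey i x hi hni hx a bb, rekey i' x hi' hni' hx a' bb'] at h1
    rwa [sub_right_inj] at h1
  set r : ℝ := (i*i').re with hr
  have hrr : r^2 ≠ 1 := by
    intro hr1
    have hnorm : normSq (i*i') = 1 := by
      rw [map_mul, Quaternion.normSq_eq_norm_mul_self, Quaternion.normSq_eq_norm_mul_self, hni, hni']
      ring
    rw [Quaternion.normSq_def'] at hnorm
    have e1 : (i*i').imI = 0 := by nlinarith [sq_nonneg ((i*i').imJ), sq_nonneg ((i*i').imK)]
    have e2 : (i*i').imJ = 0 := by nlinarith [sq_nonneg ((i*i').imI), sq_nonneg ((i*i').imK)]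
    have e3 : (i*i').imK = 0 := by nlinarith [sq_nonneg ((i*i').imI), sq_nonneg ((i*i').imJ)]
    have him : i * i' = (r : ℍ[ℝ]) := by
      ext
      · simp [hr]
      · simp [e1]
      · simp [e2]
      · simp [e3]
    have hi2 : i' = -(i * (r : ℍ[ℝ])) := by
      have h5 := congrArg (fun q => i * q) him
      rw [← mul_assoc, hii, neg_one_mul] at h5
      rw [← h5, neg_neg]
    have h7 : (r - 1) * (r + 1) = 0 := by nlinarith
    rcases mul_eq_zero.mp h7 with h8 | h8
    · have hr1' : (r : ℍ[ℝ]) = 1 := by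
        have : r = 1 := by linarith
        rw [this]; norm_num
      have hfin : i' = -i := by rw [hi2, hr1', mul_one]
      exact hne' (by rw [hfin, neg_neg])
    · have hr1' : (r : ℍ[ℝ]) = -1 := by
        have : r = -1 := by linarith
        rw [this]; norm_num
      have hfin : i' = i := by rw [hi2, hr1', mul_neg_one, neg_neg]
      exact hne hfin.symm
  have hx0re : (i + r • i').re = 0 := by simp [hi, hi']
  have hx0i' : ((i + r • i') * i').re = 0 := by
    rw [add_mul, smul_mul_assoc, hii']
    simp [hr]
  have hx0i : ((i + r • i') * i).re = r^2 - 1 := by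
    rw [add_mul, smul_mul_assoc, hii]
    have h9 : (i' * i).re = r := by rw [re_mul_comm]
    simp [h9]
    ring
  have k1 := key (i + r • i') hx0re
  rw [hx0i, hx0i'] at k1
  simp only [mul_zero, zero_smul] at k1
  have hc1 : (c - 1) * i = 0 := by
    have h2 : (2*(r^2-1)) ≠ 0 := by
      intro hcon
      exact hrr (by nlinarith)
    exact (smul_eq_zero.mp k1).resolve_left h2
  have hcfin : c = 1 := by
    have h4 : (c-1) * (i*i) = 0 := by rw [← mul_assoc, hc1, zero_mul]
    rw [hii, mul_neg_one, neg_eq_zero, sub_eq_zero] at h4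
    exact h4
  refine ⟨hcfin, ?_⟩
  have k2 := key i' hi'
  rw [hcfin] at k2
  simp only [sub_self, zero_mul, smul_zero] at k2
  rw [hii'] at k2
  have hre : ((-1 : ℍ[ℝ])).re = -1 := by simp
  rw [hre] at k2
  have hc'1 : (c' - 1) * i' = 0 := by
    have h2 : (2*(-1 : ℝ)) ≠ 0 := by norm_num
    exact (smul_eq_zero.mp k2.symm).resolve_left h2
  have h4 : (c'-1) * (i'*i') = 0 := by rw [← mul_assoc, hc'1, zero_mul]
  rw [hii', mul_neg_one, neg_eq_zero, sub_eq_zero] at h4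
  exact h4
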